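/- Let D₁ : X₁ → Y₁ and D₂ : X₂ → Y₂ be Fredholm operators between Banach spaces, let V be a finite-dimensional Banach space, and let e₁ : X₁ → V, e₂ : X₂ → V be bounded linear maps (evaluation maps). Define X := {(ξ₁, ξ₂) ∈ X₁ × X₂ : e₁ξ₁ = e₂ξ₂} and D : X → Y₁ × Y₂ by D(ξ₁,ξ₂) = (D₁ξ₁, D₂ξ₂). Then D is a Fredholm operator. -/

import Mathlib

/-- A continuous linear map between Banach spaces whose range has finite codimension
has closed range. -/
theorem isClosed_range_of_fd_quotient
    {X Y : Type*} [NormedAddCommGroup X] [NormedSpace ℝ X] [CompleteSpace X]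
    [NormedAddCommGroup Y] [NormedSpace ℝ Y] [CompleteSpace Y]
    (f : X →L[ℝ] Y) (h : FiniteDimensional ℝ (Y ⧸ LinearMap.range (f : X →ₗ[ℝ] Y))) :
    IsClosed (LinearMap.range (f : X →ₗ[ℝ] Y) : Set Y) := by
  classical
  obtain ⟨G, hG⟩ := (LinearMap.range (f : X →ₗ[ℝ] Y)).exists_isCompl
  haveI : FiniteDimensional ℝ G :=
    (Submodule.quotientEquivOfIsCompl _ G hG).finiteDimensional
  haveI : IsClosed ((LinearMap.ker (f : X →ₗ[ℝ] Y) : Submodule ℝ X) : Set X) :=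
    ContinuousLinearMap.isClosed_ker f
  set N : Submodule ℝ X := LinearMap.ker (f : X →ₗ[ℝ] Y) with hN
  let fbar : (X ⧸ N) →ₗ[ℝ] Y := N.liftQ (f : X →ₗ[ℝ] Y) le_rfl
  have hfbar_mk : ∀ x : X, fbar (N.mkQ x) = f x := fun x => rfl
  have hfbar_cont : Continuous fbar := by
    rw [← (N.isOpenQuotientMap_mkQ).continuous_comp_iff]
    exact f.continuous
  have hrange_fbar : LinearMap.range fbar = LinearMap.range (f : X →ₗ[ℝ] Y) := by
    rw [Submodule.range_liftQ]
  have hker_fbar : LinearMap.ker fbar = ⊥ := Submodule.ker_liftQ_eq_bot _ _ _ le_rfl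
  set S : ((X ⧸ N) × G) →ₗ[ℝ] Y := fbar.coprod G.subtype with hS
  have hS_cont : Continuous S := by
    have : Continuous fun p : (X ⧸ N) × G => fbar p.1 + (p.2 : Y) :=
      (hfbar_cont.comp continuous_fst).add (continuous_subtype_val.comp continuous_snd)
    exact this
  have hS_inj : Function.Injective S := by
    rw [← LinearMap.ker_eq_bot, Submodule.eq_bot_iff]
    rintro ⟨x, g⟩ hxg
    simp only [LinearMap.mem_ker, LinearMap.coprod_apply, Submodule.coe_subtype, hS] at hxg
    have hg0 : (g : Y) ∈ (⊥ : Submodule ℝ Y) := by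
      rw [← hG.disjoint.eq_bot]
      refine ⟨?_, g.2⟩
      rw [← hrange_fbar]
      exact ⟨-x, by rw [map_neg]; exact neg_eq_of_add_eq_zero_right hxg⟩
    have hg : g = 0 := Subtype.ext (by simpa using hg0)
    have hx : x = 0 := by
      have h0 : fbar x = 0 := by rw [hg] at hxg; simpa using hxg
      have hm : x ∈ LinearMap.ker fbar := h0
      rw [hker_fbar] at hm
      simpa using hm
    simp [hg, hx]
  have hS_surj : Function.Surjective S := by
    rw [← LinearMap.range_eq_top, hS, LinearMap.range_coprod, hrange_fbar,
      Submodule.range_subtype]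
    exact hG.sup_eq_top
  let e : ((X ⧸ N) × G) ≃ₗ[ℝ] Y := LinearEquiv.ofBijective S ⟨hS_inj, hS_surj⟩
  have he_cont : Continuous e := hS_cont
  have he_symm_cont : Continuous e.symm := e.continuous_symm he_cont
  have hset : (LinearMap.range (f : X →ₗ[ℝ] Y) : Set Y) = e.symm ⁻¹' {p | p.2 = 0} := by
    ext y
    simp only [Set.mem_preimage, Set.mem_setOf_eq, SetLike.mem_coe]
    constructor
    · rintro ⟨x, rfl⟩
      have he : e (N.mkQ x, 0) = f x := by
        show fbar (N.mkQ x) + ((0 : G) : Y) = f x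
        rw [ZeroMemClass.coe_zero, add_zero]
        exact hfbar_mk x
      rw [ContinuousLinearMap.coe_coe, ← he, e.symm_apply_apply]
    · intro h2
      have hy : y = fbar (e.symm y).1 + ((e.symm y).2 : Y) := (e.apply_symm_apply y).symm
      rw [h2] at hy
      simp only [ZeroMemClass.coe_zero, add_zero] at hy
      rw [← hrange_fbar]
      exact ⟨(e.symm y).1, hy.symm⟩
  rw [hset]
  exact (isClosed_singleton.preimage continuous_snd).preimage he_symm_cont

private theorem range_coe_prodMap {X₁ X₂ Y₁ Y₂ : Type*}
    [NormedAddCommGroup X₁] [NormedSpace ℝ X₁] [NormedAddCommGroup X₂] [NormedSpace ℝ X₂]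
    [NormedAddCommGroup Y₁] [NormedSpace ℝ Y₁] [NormedAddCommGroup Y₂] [NormedSpace ℝ Y₂]
    (D₁ : X₁ →L[ℝ] Y₁) (D₂ : X₂ →L[ℝ] Y₂) :
    LinearMap.range ((D₁.prodMap D₂ : (X₁ × X₂) →L[ℝ] Y₁ × Y₂) : (X₁ × X₂) →ₗ[ℝ] Y₁ × Y₂)
      = (LinearMap.range (D₁ : X₁ →ₗ[ℝ] Y₁)).prod (LinearMap.range (D₂ : X₂ →ₗ[ℝ] Y₂)) := by
  ext ⟨y₁, y₂⟩
  simp only [LinearMap.mem_range, Submodule.mem_prod, ContinuousLinearMap.coe_coe]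
  constructor
  · rintro ⟨⟨x₁, x₂⟩, h⟩
    exact ⟨⟨x₁, congrArg Prod.fst h⟩, ⟨x₂, congrArg Prod.snd h⟩⟩
  · rintro ⟨⟨x₁, h₁⟩, ⟨x₂, h₂⟩⟩
    exact ⟨(x₁, x₂), by show (D₁ x₁, D₂ x₂) = (y₁, y₂); rw [h₁, h₂]⟩

private theorem ker_coe_prodMap {X₁ X₂ Y₁ Y₂ : Type*}
    [NormedAddCommGroup X₁] [NormedSpace ℝ X₁] [NormedAddCommGroup X₂] [NormedSpace ℝ X₂]
    [NormedAddCommGroup Y₁] [NormedSpace ℝ Y₁] [NormedAddCommGroup Y₂] [NormedSpace ℝ Y₂]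
    (D₁ : X₁ →L[ℝ] Y₁) (D₂ : X₂ →L[ℝ] Y₂) :
    LinearMap.ker ((D₁.prodMap D₂ : (X₁ × X₂) →L[ℝ] Y₁ × Y₂) : (X₁ × X₂) →ₗ[ℝ] Y₁ × Y₂)
      = (LinearMap.ker (D₁ : X₁ →ₗ[ℝ] Y₁)).prod (LinearMap.ker (D₂ : X₂ →ₗ[ℝ] Y₂)) := by
  ext ⟨x₁, x₂⟩
  simp only [LinearMap.mem_ker, Submodule.mem_prod, ContinuousLinearMap.coe_coe]
  show (D₁ x₁, D₂ x₂) = 0 ↔ _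
  rw [Prod.mk_eq_zero]

/-- A bounded linear operator between Banach spaces is Fredholm if it has closed range,
finite-dimensional kernel and finite-dimensional cokernel. -/
def IsFredholm {X Y : Type*} [NormedAddCommGroup X] [NormedSpace ℝ X]
    [NormedAddCommGroup Y] [NormedSpace ℝ Y] (D : X →L[ℝ] Y) : Prop :=
  IsClosed (LinearMap.range (D : X →ₗ[ℝ] Y) : Set Y) ∧
  FiniteDimensional ℝ (LinearMap.ker (D : X →ₗ[ℝ] Y)) ∧
  FiniteDimensional ℝ (Y ⧸ LinearMap.range (D : X →ₗ[ℝ] Y))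

/-- If `D₁ : X₁ → Y₁`, `D₂ : X₂ → Y₂` are Fredholm, `V` is finite-dimensional, and
`e₁ : X₁ → V`, `e₂ : X₂ → V` are bounded linear, then the restriction of `D₁ × D₂` to
`X = {(ξ₁, ξ₂) : e₁ξ₁ = e₂ξ₂}` is Fredholm. -/
theorem stmt18 {X₁ X₂ Y₁ Y₂ V : Type*}
    [NormedAddCommGroup X₁] [NormedSpace ℝ X₁] [CompleteSpace X₁]
    [NormedAddCommGroup X₂] [NormedSpace ℝ X₂] [CompleteSpace X₂]
    [NormedAddCommGroup Y₁] [NormedSpace ℝ Y₁] [CompleteSpace Y₁]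
    [NormedAddCommGroup Y₂] [NormedSpace ℝ Y₂] [CompleteSpace Y₂]
    [NormedAddCommGroup V] [NormedSpace ℝ V] [FiniteDimensional ℝ V]
    (D₁ : X₁ →L[ℝ] Y₁) (D₂ : X₂ →L[ℝ] Y₂)
    (hD₁ : IsFredholm D₁) (hD₂ : IsFredholm D₂)
    (e₁ : X₁ →L[ℝ] V) (e₂ : X₂ →L[ℝ] V) :
    IsFredholm
      (((D₁.prodMap D₂).comp
        (LinearMap.ker (((e₁.comp (ContinuousLinearMap.fst ℝ X₁ X₂) -
          e₂.comp (ContinuousLinearMap.snd ℝ X₁ X₂) : X₁ × X₂ →L[ℝ] V) : X₁ × X₂ →ₗ[ℝ] V))).subtypeL)) := by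
  classical
  obtain ⟨hc₁, hk₁, hq₁⟩ := hD₁
  obtain ⟨hc₂, hk₂, hq₂⟩ := hD₂
  set E : (X₁ × X₂) →L[ℝ] V :=
    e₁.comp (ContinuousLinearMap.fst ℝ X₁ X₂) - e₂.comp (ContinuousLinearMap.snd ℝ X₁ X₂)
    with hE
  set K : Submodule ℝ (X₁ × X₂) := LinearMap.ker (E : (X₁ × X₂) →ₗ[ℝ] V) with hK
  haveI hKclosed : IsClosed (K : Set (X₁ × X₂)) := ContinuousLinearMap.isClosed_ker E
  haveI : CompleteSpace K := hKclosed.completeSpace_coe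
  set T : (X₁ × X₂) →L[ℝ] (Y₁ × Y₂) := D₁.prodMap D₂ with hT
  set Tl : (X₁ × X₂) →ₗ[ℝ] (Y₁ × Y₂) := (T : (X₁ × X₂) →ₗ[ℝ] (Y₁ × Y₂)) with hTl
  set D : K →L[ℝ] (Y₁ × Y₂) := T.comp K.subtypeL with hD
  -- the range of D is the image of K under T
  have hrange : LinearMap.range (D : K →ₗ[ℝ] (Y₁ × Y₂)) = K.map Tl := by
    ext y
    simp only [LinearMap.mem_range, Submodule.mem_map]
    constructor
    · rintro ⟨x, rfl⟩
      exact ⟨(x : X₁ × X₂), x.2, rfl⟩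
    · rintro ⟨x, hx, rfl⟩
      exact ⟨⟨x, hx⟩, rfl⟩
  -- the quotient by K is finite dimensional
  haveI hfdK : FiniteDimensional ℝ ((X₁ × X₂) ⧸ K) := by
    set El : (X₁ × X₂) →ₗ[ℝ] V := (E : (X₁ × X₂) →ₗ[ℝ] V) with hEl
    have hKE : K = LinearMap.ker El := by
      ext x
      simp [hK, LinearMap.mem_ker, hEl]
    exact ((Submodule.quotEquivOfEq _ _ hKE).trans El.quotKerEquivRange).symm.finiteDimensional
  -- finite-dimensional kernel
  have hkerD_fd : FiniteDimensional ℝ (LinearMap.ker (D : K →ₗ[ℝ] (Y₁ × Y₂))) := by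
    haveI h1 : FiniteDimensional ℝ (LinearMap.ker Tl) := by
      rw [hTl, hT, ker_coe_prodMap, LinearMap.prod_eq_sup_map]
      infer_instance
    refine FiniteDimensional.of_injective
      (LinearMap.codRestrict (LinearMap.ker Tl)
        ((K.subtype).comp (LinearMap.ker (D : K →ₗ[ℝ] (Y₁ × Y₂))).subtype) ?_) ?_
    · intro c
      exact c.2
    · intro a b hab
      have h' := congrArg Subtype.val hab
      exact Subtype.ext (Subtype.ext h')
  -- finite-dimensional quotient by the range of T
  have hrT : LinearMap.range Tl = (LinearMap.range (D₁ : X₁ →ₗ[ℝ] Y₁)).prod (LinearMap.range (D₂ : X₂ →ₗ[ℝ] Y₂)) := by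
    rw [hTl, hT, range_coe_prodMap]
  have hle₁ : LinearMap.range (D₁ : X₁ →ₗ[ℝ] Y₁) ≤
      LinearMap.ker ((LinearMap.range Tl).mkQ.comp (LinearMap.inl ℝ Y₁ Y₂)) := by
    intro y hy
    simp only [LinearMap.mem_ker, LinearMap.comp_apply, LinearMap.inl_apply,
      Submodule.mkQ_apply, Submodule.Quotient.mk_eq_zero]
    rw [hrT]
    exact Submodule.mem_prod.mpr ⟨hy, (LinearMap.range (D₂ : X₂ →ₗ[ℝ] Y₂)).zero_mem⟩
  have hle₂ : LinearMap.range (D₂ : X₂ →ₗ[ℝ] Y₂) ≤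
      LinearMap.ker ((LinearMap.range Tl).mkQ.comp (LinearMap.inr ℝ Y₁ Y₂)) := by
    intro y hy
    simp only [LinearMap.mem_ker, LinearMap.comp_apply, LinearMap.inr_apply,
      Submodule.mkQ_apply, Submodule.Quotient.mk_eq_zero]
    rw [hrT]
    exact Submodule.mem_prod.mpr ⟨(LinearMap.range (D₁ : X₁ →ₗ[ℝ] Y₁)).zero_mem, hy⟩
  haveI hfdQT : FiniteDimensional ℝ ((Y₁ × Y₂) ⧸ LinearMap.range Tl) := by
    let g := LinearMap.coprod
      ((LinearMap.range (D₁ : X₁ →ₗ[ℝ] Y₁)).liftQ ((LinearMap.range Tl).mkQ.comp (LinearMap.inl ℝ Y₁ Y₂)) hle₁)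
      ((LinearMap.range (D₂ : X₂ →ₗ[ℝ] Y₂)).liftQ ((LinearMap.range Tl).mkQ.comp (LinearMap.inr ℝ Y₁ Y₂)) hle₂)
    have hg : Function.Surjective g := by
      intro z
      obtain ⟨⟨a, b⟩, rfl⟩ := Submodule.mkQ_surjective _ z
      refine ⟨(Submodule.Quotient.mk a, Submodule.Quotient.mk b), ?_⟩
      show (LinearMap.range Tl).mkQ ((a, 0) : Y₁ × Y₂)
          + (LinearMap.range Tl).mkQ ((0, b) : Y₁ × Y₂) = _
      rw [← map_add]
      congr 1
      simp
    exact Module.Finite.of_surjective g hg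
  -- complements
  obtain ⟨F, hF⟩ := K.exists_isCompl
  haveI : FiniteDimensional ℝ F := (Submodule.quotientEquivOfIsCompl K F hF).finiteDimensional
  obtain ⟨G, hGc⟩ := (LinearMap.range Tl).exists_isCompl
  haveI : FiniteDimensional ℝ G :=
    (Submodule.quotientEquivOfIsCompl _ G hGc).finiteDimensional
  set p : Submodule ℝ (Y₁ × Y₂) := K.map Tl with hp
  set W : Submodule ℝ (Y₁ × Y₂) := F.map Tl ⊔ G with hW
  have hsuptop : p ⊔ W = ⊤ := by
    rw [hp, hW, ← sup_assoc, ← Submodule.map_sup, hF.sup_eq_top, Submodule.map_top]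
    exact hGc.sup_eq_top
  haveI hfdQp : FiniteDimensional ℝ ((Y₁ × Y₂) ⧸ p) := by
    have hWtop : W.map p.mkQ = ⊤ := by
      rw [Submodule.map_mkQ_eq_top]
      exact hsuptop
    have hsurj : Function.Surjective (p.mkQ.comp W.subtype) := by
      rw [← LinearMap.range_eq_top, LinearMap.range_comp, Submodule.range_subtype, hWtop]
    exact Module.Finite.of_surjective _ hsurj
  have hcoker : FiniteDimensional ℝ ((Y₁ × Y₂) ⧸ LinearMap.range (D : K →ₗ[ℝ] (Y₁ × Y₂))) :=
    (Submodule.quotEquivOfEq p (LinearMap.range (D : K →ₗ[ℝ] (Y₁ × Y₂))) hrange.symm).finiteDimensional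
  exact ⟨isClosed_range_of_fd_quotient D hcoker, hkerD_fd, hcoker⟩
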